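/- Let H be a complex Hilbert space and let (T₁,T₂) be a commuting pair of bounded linear operators on H forming a toral 2-isometry. Let f₀ ∈ H satisfy T₁^*f₀ = 0 and T₂^*f₀ = 0, and assume that ⟨T₁^m f₀, T₁^p T₂^q f₀⟩ = 0 for all integers q ≥ 1 and m, p ≥ 0, and ⟨T₂^n f₀, T₁^p T₂^q f₀⟩ = 0 for all integers p ≥ 1 and n, q ≥ 0. Then for all nonnegative integers m, n, p, q: ⟨T₁^m T₂^n f₀, T₁^p T₂^q f₀⟩ equals 0 if m ≠ p and n ≠ q; equals ⟨T₂^n f₀, T₂^q f₀⟩ if m = p and n ≠ q; equals ⟨T₁^m f₀, T₁^p f₀⟩ if m ≠ p and n = q; and equals ‖T₁^m f₀‖² + ‖T₂^n f₀‖² − ‖f₀‖² if m = p and n = q. -/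

import Mathlib

open ContinuousLinearMap

noncomputable def stmtA {H : Type*} [NormedAddCommGroup H] [InnerProductSpace ℂ H]
    (T₁ T₂ : H →L[ℂ] H) (f₀ : H) (m n p q : ℕ) : ℂ :=
  inner ℂ (((T₁ ^ m) * (T₂ ^ n)) f₀) (((T₁ ^ p) * (T₂ ^ q)) f₀)

noncomputable def stmtB {H : Type*} [NormedAddCommGroup H] [InnerProductSpace ℂ H]
    (T₁ T₂ : H →L[ℂ] H) (f₀ : H) (m n p q : ℕ) : ℂ :=
  (if n = q then (inner ℂ ((T₁ ^ m) f₀) ((T₁ ^ p) f₀) : ℂ) else 0)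
  + (if m = p then (inner ℂ ((T₂ ^ n) f₀) ((T₂ ^ q) f₀) : ℂ) else 0)
  - (if m = p ∧ n = q then ((‖f₀‖ ^ 2 : ℝ) : ℂ) else 0)

theorem stmt19 {H : Type*} [NormedAddCommGroup H] [InnerProductSpace ℂ H] [CompleteSpace H]
    (T₁ T₂ : H →L[ℂ] H) (hcomm : T₁ * T₂ = T₂ * T₁)
    (htoral : ∀ S T : H →L[ℂ] H, S ∈ ({T₁, T₂} : Set (H →L[ℂ] H)) →
      T ∈ ({T₁, T₂} : Set (H →L[ℂ] H)) →
      (1 : H →L[ℂ] H) - adjoint S * S - adjoint T * T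
        + adjoint T * adjoint S * S * T = 0)
    (f₀ : H) (hf₁ : adjoint T₁ f₀ = 0) (hf₂ : adjoint T₂ f₀ = 0)
    (horth₁ : ∀ q m p : ℕ, 1 ≤ q →
      (inner ℂ ((T₁ ^ m) f₀) (((T₁ ^ p) * (T₂ ^ q)) f₀) : ℂ) = 0)
    (horth₂ : ∀ p n q : ℕ, 1 ≤ p →
      (inner ℂ ((T₂ ^ n) f₀) (((T₁ ^ p) * (T₂ ^ q)) f₀) : ℂ) = 0)
    (m n p q : ℕ) :
    (m ≠ p → n ≠ q →
      (inner ℂ (((T₁ ^ m) * (T₂ ^ n)) f₀) (((T₁ ^ p) * (T₂ ^ q)) f₀) : ℂ) = 0) ∧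
    (m = p → n ≠ q →
      (inner ℂ (((T₁ ^ m) * (T₂ ^ n)) f₀) (((T₁ ^ p) * (T₂ ^ q)) f₀) : ℂ)
        = (inner ℂ ((T₂ ^ n) f₀) ((T₂ ^ q) f₀) : ℂ)) ∧
    (m ≠ p → n = q →
      (inner ℂ (((T₁ ^ m) * (T₂ ^ n)) f₀) (((T₁ ^ p) * (T₂ ^ q)) f₀) : ℂ)
        = (inner ℂ ((T₁ ^ m) f₀) ((T₁ ^ p) f₀) : ℂ)) ∧
    (m = p → n = q →
      (inner ℂ (((T₁ ^ m) * (T₂ ^ n)) f₀) (((T₁ ^ p) * (T₂ ^ q)) f₀) : ℂ)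
        = ((‖(T₁ ^ m) f₀‖ ^ 2 + ‖(T₂ ^ n) f₀‖ ^ 2 - ‖f₀‖ ^ 2 : ℝ) : ℂ)) := by
  have hc : Commute T₁ T₂ := hcomm
  -- operator splitting lemmas
  have e1 : ∀ i j : ℕ, T₁ ^ (i+1) * T₂ ^ (j+1) = T₁ * (T₂ * (T₁ ^ i * T₂ ^ j)) := by
    intro i j
    rw [pow_succ', pow_succ', mul_assoc, ← mul_assoc (T₁ ^ i), (hc.pow_left i).eq, mul_assoc]
  have e2 : ∀ i j : ℕ, T₁ ^ (i+1) * T₂ ^ j = T₁ * (T₁ ^ i * T₂ ^ j) := by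
    intro i j; rw [pow_succ', mul_assoc]
  have e3 : ∀ i j : ℕ, T₁ ^ i * T₂ ^ (j+1) = T₂ * (T₁ ^ i * T₂ ^ j) := by
    intro i j
    rw [pow_succ', ← mul_assoc, (hc.pow_left i).eq, mul_assoc]
  -- the key pointwise identity from the toral 2-isometry condition
  have h12 := htoral T₁ T₂ (by simp) (by simp)
  have h0 : ∀ y : H, (adjoint T₂) ((adjoint T₁) (T₁ (T₂ y)))
      = (adjoint T₁) (T₁ y) + (adjoint T₂) (T₂ y) - y := by
    intro y
    have := DFunLike.congr_fun h12 y
    simp only [ContinuousLinearMap.sub_apply, ContinuousLinearMap.add_apply,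
      ContinuousLinearMap.mul_apply, ContinuousLinearMap.one_apply,
      ContinuousLinearMap.zero_apply] at this
    have h := this
    abel_nf at h ⊢
    linear_combination (norm := abel) h
  have key : ∀ x y : H, (inner ℂ (T₁ (T₂ x)) (T₁ (T₂ y)) : ℂ)
      = inner ℂ (T₁ x) (T₁ y) + inner ℂ (T₂ x) (T₂ y) - inner ℂ x y := by
    intro x y
    rw [← adjoint_inner_right T₁, ← adjoint_inner_right T₂, h0 y,
      inner_sub_right, inner_add_right, adjoint_inner_right, adjoint_inner_right]
  -- vanishing inner products against f₀
  have z1 : ∀ k : ℕ, 1 ≤ k → (inner ℂ f₀ ((T₁ ^ k) f₀) : ℂ) = 0 := by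
    intro k hk
    obtain ⟨k', rfl⟩ := Nat.exists_eq_add_of_le' hk
    rw [pow_succ', ContinuousLinearMap.mul_apply, ← adjoint_inner_left, hf₁, inner_zero_left]
  have z2 : ∀ k : ℕ, 1 ≤ k → (inner ℂ f₀ ((T₂ ^ k) f₀) : ℂ) = 0 := by
    intro k hk
    obtain ⟨k', rfl⟩ := Nat.exists_eq_add_of_le' hk
    rw [pow_succ', ContinuousLinearMap.mul_apply, ← adjoint_inner_left, hf₂, inner_zero_left]
  -- conjugation symmetry of stmtB
  have Bconj : ∀ m n p q : ℕ, (starRingEnd ℂ) (stmtB T₁ T₂ f₀ p q m n) = stmtB T₁ T₂ f₀ m n p q := by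
    intro m n p q
    rcases eq_or_ne m p with h1 | h1 <;> rcases eq_or_ne n q with h2 | h2
    · subst h1; subst h2
      simp [stmtB, inner_conj_symm, Complex.conj_ofReal]
    · subst h1
      simp [stmtB, h2, h2.symm, inner_conj_symm]
    · subst h2
      simp [stmtB, h1, h1.symm, inner_conj_symm]
    · simp [stmtB, h1, h2, h1.symm, h2.symm]
  have Aconj : ∀ m n p q : ℕ, (starRingEnd ℂ) (stmtA T₁ T₂ f₀ p q m n) = stmtA T₁ T₂ f₀ m n p q := by
    intro m n p q
    exact inner_conj_symm _ _
  -- base case n = 0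
  have base1 : ∀ m p q : ℕ, stmtA T₁ T₂ f₀ m 0 p q = stmtB T₁ T₂ f₀ m 0 p q := by
    intro m p q
    rcases Nat.eq_zero_or_pos q with rfl | hq
    · rcases eq_or_ne m p with rfl | h1
      · simp [stmtA, stmtB, inner_self_eq_norm_sq_to_K]
      · simp [stmtA, stmtB, h1]
    · have hA : stmtA T₁ T₂ f₀ m 0 p q = 0 := by
        have := horth₁ q m p hq
        simpa [stmtA] using this
      rw [hA]
      have hq0 : ¬ (0 : ℕ) = q := by omega
      have hz := z2 q hq
      simp at hz
      simp [stmtB, hq0, hz]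
  -- base case m = 0
  have base2 : ∀ n p q : ℕ, stmtA T₁ T₂ f₀ 0 n p q = stmtB T₁ T₂ f₀ 0 n p q := by
    intro n p q
    rcases Nat.eq_zero_or_pos p with rfl | hp
    · rcases eq_or_ne n q with rfl | h2
      · simp [stmtA, stmtB, inner_self_eq_norm_sq_to_K]
      · simp [stmtA, stmtB, h2]
    · have hA : stmtA T₁ T₂ f₀ 0 n p q = 0 := by
        have := horth₂ p n q hp
        simpa [stmtA] using this
      rw [hA]
      have hp0 : ¬ (0 : ℕ) = p := by omega
      have hz := z1 p hp
      simp at hz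
      simp [stmtB, hp0, hz]
  -- main induction
  have main : ∀ N m n p q : ℕ, m + n + p + q ≤ N →
      stmtA T₁ T₂ f₀ m n p q = stmtB T₁ T₂ f₀ m n p q := by
    intro N
    induction N with
    | zero =>
      intro m n p q h
      have hn : n = 0 := by omega
      subst hn; exact base1 m p q
    | succ N ih =>
      intro m n p q hle
      rcases Nat.eq_zero_or_pos n with rfl | hn
      · exact base1 m p q
      rcases Nat.eq_zero_or_pos q with rfl | hq
      · rw [← Aconj, ← Bconj, base1 p m n]
      rcases Nat.eq_zero_or_pos m with rfl | hm
      · exact base2 n p q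
      rcases Nat.eq_zero_or_pos p with rfl | hp
      · rw [← Aconj, ← Bconj, base2 q m n]
      obtain ⟨m', rfl⟩ : ∃ m', m = m' + 1 := ⟨m - 1, by omega⟩
      obtain ⟨n', rfl⟩ : ∃ n', n = n' + 1 := ⟨n - 1, by omega⟩
      obtain ⟨p', rfl⟩ : ∃ p', p = p' + 1 := ⟨p - 1, by omega⟩
      obtain ⟨q', rfl⟩ : ∃ q', q = q' + 1 := ⟨q - 1, by omega⟩
      have hrec : stmtA T₁ T₂ f₀ (m'+1) (n'+1) (p'+1) (q'+1)
          = stmtA T₁ T₂ f₀ (m'+1) n' (p'+1) q' + stmtA T₁ T₂ f₀ m' (n'+1) p' (q'+1)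
            - stmtA T₁ T₂ f₀ m' n' p' q' := by
        have w1 : ∀ i j : ℕ, ((T₁ ^ (i+1) * T₂ ^ (j+1)) f₀) = T₁ (T₂ ((T₁ ^ i * T₂ ^ j) f₀)) := by
          intro i j; rw [e1 i j]; rfl
        have w2 : ∀ i j : ℕ, ((T₁ ^ (i+1) * T₂ ^ j) f₀) = T₁ ((T₁ ^ i * T₂ ^ j) f₀) := by
          intro i j; rw [e2 i j]; rfl
        have w3 : ∀ i j : ℕ, ((T₁ ^ i * T₂ ^ (j+1)) f₀) = T₂ ((T₁ ^ i * T₂ ^ j) f₀) := by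
          intro i j; rw [e3 i j]; rfl
        unfold stmtA
        rw [w1 m' n', w1 p' q', key, ← w2 m' n', ← w2 p' q', ← w3 m' n', ← w3 p' q']
      rw [hrec, ih (m'+1) n' (p'+1) q' (by omega), ih m' (n'+1) p' (q'+1) (by omega),
        ih m' n' p' q' (by omega)]
      rcases eq_or_ne m' p' with h1 | h1 <;> rcases eq_or_ne n' q' with h2 | h2 <;>
        simp [stmtB, h1, h2] <;> ring
  have hmain := main (m + n + p + q) m n p q le_rfl
  refine ⟨?_, ?_, ?_, ?_⟩
  · intro h1 h2
    have := hmain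
    simpa [stmtA, stmtB, h1, h2] using this
  · intro h1 h2
    have := hmain
    simpa [stmtA, stmtB, h1, h2] using this
  · intro h1 h2
    have := hmain
    simpa [stmtA, stmtB, h1, h2] using this
  · intro h1 h2
    subst h1; subst h2
    have := hmain
    simp only [stmtA, stmtB] at this
    rw [this]
    simp [inner_self_eq_norm_sq_to_K]
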